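/- For any bipartite density matrix ρ^{AB} on ℂ² ⊗ ℂ², Tr((ρ^A)²) + Tr((ρ^B)²) ≤ 1 + Tr((ρ^{AB})²), i.e., the linear mutual entropy S_L(A:B) = S_L(ρ^A) + S_L(ρ^B) - S_L(ρ^{AB}) is nonnegative. -/

import Mathlib

open ComplexOrder Matrix
open scoped MatrixOrder

lemma trace_mul_re_nonneg {n : Type*} [Fintype n] [DecidableEq n]
    {A B : Matrix n n ℂ} (hA : A.PosSemidef) (hB : B.PosSemidef) :
    0 ≤ ((A * B).trace).re := by
  have h1 : (A * B).trace = (CFC.sqrt A * B * CFC.sqrt A).trace := by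
    have h2 : A * B = CFC.sqrt A * (CFC.sqrt A * B) := by
      rw [← Matrix.mul_assoc, CFC.sqrt_mul_sqrt_self A hA.nonneg]
    rw [h2, Matrix.trace_mul_comm, Matrix.mul_assoc]
  have hC : (CFC.sqrt A * B * CFC.sqrt A).PosSemidef := by
    have := hB.mul_mul_conjTranspose_same (CFC.sqrt A)
    rwa [(CFC.sqrt_nonneg A).posSemidef.isHermitian.eq] at this
  rw [h1]
  rw [Matrix.trace, Complex.re_sum]
  apply Finset.sum_nonneg
  intro i _
  have := hC.re_dotProduct_nonneg (Pi.single i 1)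
  simpa [dotProduct, Matrix.mulVec, Pi.single_apply, Finset.sum_ite_eq,
    Matrix.diag] using this

theorem linear_mutual_entropy_nonneg
    (ρ : Matrix (Fin 2 × Fin 2) (Fin 2 × Fin 2) ℂ)
    (hpsd : ρ.PosSemidef) (htr : ρ.trace = 1)
    (ρA ρB : Matrix (Fin 2) (Fin 2) ℂ)
    (hρA : ∀ i j, ρA i j = ∑ b, ρ (i, b) (j, b))
    (hρB : ∀ a b, ρB a b = ∑ i, ρ (i, a) (i, b)) :
    Complex.re ((ρA * ρA).trace) + Complex.re ((ρB * ρB).trace) ≤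
      1 + Complex.re ((ρ * ρ).trace) := by
  set J : Matrix (Fin 2) (Fin 2) ℂ := !![0, -1; 1, 0] with hJ
  set U : Matrix (Fin 2 × Fin 2) (Fin 2 × Fin 2) ℂ :=
    Matrix.of fun p q => J p.1 q.1 * J p.2 q.2 with hU
  set τ : Matrix (Fin 2 × Fin 2) (Fin 2 × Fin 2) ℂ := U * ρᵀ * Uᴴ with hτdef
  have hτ : τ.PosSemidef := hpsd.transpose.mul_mul_conjTranspose_same U
  have key : (ρ * τ).trace =
      ρ.trace * ρ.trace - (ρA * ρA).trace - (ρB * ρB).trace + (ρ * ρ).trace := by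
    simp only [hτdef, hU, hJ, Matrix.trace, Matrix.diag, Matrix.mul_apply,
      Matrix.conjTranspose_apply, Matrix.transpose_apply, Matrix.of_apply,
      Fintype.sum_prod_type, Fin.sum_univ_two, hρA, hρB,
      Matrix.cons_val', Matrix.cons_val_zero, Matrix.cons_val_one,
      Matrix.head_cons, Matrix.head_fin_const, Matrix.empty_val',
      Matrix.cons_val_fin_one, star_mul', star_zero, star_one, star_neg]
    ring
  have h0 : 0 ≤ ((ρ * τ).trace).re := trace_mul_re_nonneg hpsd hτ
  rw [key, htr, mul_one] at h0
  simp only [Complex.add_re, Complex.sub_re, Complex.one_re] at h0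
  linarith
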